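/- If the longest strictly increasing subsequence of a sequence a : Fin n → ℝ with distinct values has length k, then the index set Fin n can be partitioned into k sets each of which is a strictly decreasing subsequence. -/

import Mathlib

theorem partition_into_LIS_many_decreasing (n k : ℕ) (a : Fin n → ℝ)
    (ha : Function.Injective a)
    (hk : IsGreatest {m : ℕ | ∃ g : Fin m → Fin n, StrictMono g ∧ StrictMono (a ∘ g)} k) :
    ∃ c : Fin n → Fin k, ∀ j : Fin k, StrictAntiOn a {i | c i = j} := by
  -- handle n = 0
  rcases Nat.eq_zero_or_pos n with hn | hn
  · subst hn
    exact ⟨Fin.elim0, fun j x hx => x.elim0⟩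
  -- T i : lengths (minus one) of increasing subsequences ending at i
  set T : Fin n → Set ℕ := fun i =>
    {m : ℕ | ∃ g : Fin (m + 1) → Fin n, StrictMono g ∧ StrictMono (a ∘ g) ∧ g (Fin.last m) = i}
    with hT
  have h0 : ∀ i, 0 ∈ T i := by
    intro i
    refine ⟨fun _ => i, ?_, ?_, rfl⟩
    · intro p q hpq; exact absurd hpq (by omega)
    · intro p q hpq; exact absurd hpq (by omega)
  have hbdd : ∀ i, ∀ m ∈ T i, m + 1 ≤ k := by
    intro i m ⟨g, hg1, hg2, _⟩
    exact hk.2 ⟨g, hg1, hg2⟩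
  have hbdd' : ∀ i, BddAbove (T i) := fun i => ⟨k, fun m hm => by have := hbdd i m hm; omega⟩
  set f : Fin n → ℕ := fun i => sSup (T i) with hf
  have hmem : ∀ i, f i ∈ T i := fun i => Nat.sSup_mem ⟨0, h0 i⟩ (hbdd' i)
  have hflt : ∀ i, f i < k := by
    intro i
    have := hbdd i (f i) (hmem i)
    omega
  -- extension lemma
  have hext : ∀ i j : Fin n, i < j → a i < a j → f i < f j := by
    intro i j hij haij
    obtain ⟨g, hg1, hg2, hg3⟩ := hmem i
    generalize hm : f i = m at *
    set g' : Fin (m + 1 + 1) → Fin n := fun q =>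
      if h : (q : ℕ) < m + 1 then g ⟨q, h⟩ else j with hg'
    have hval : ∀ q : Fin (m + 1 + 1), ∀ hq : (q : ℕ) < m + 1, g' q = g ⟨q, hq⟩ := by
      intro q hq; simp [hg', hq, show (q : ℕ) ≤ m by omega]
    have hlastval : g' (Fin.last (m + 1)) = j := by simp [hg']
    have hle : ∀ q : Fin (m + 1), g q ≤ i := by
      intro q
      rw [← hg3]
      exact hg1.monotone (Fin.le_last q)
    have hale : ∀ q : Fin (m + 1), a (g q) ≤ a i := by
      intro q
      rw [← hg3]
      exact hg2.monotone (Fin.le_last q)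
    have key : m + 1 ∈ T j := by
      refine ⟨g', ?_, ?_, hlastval⟩
      · intro p q hpq
        by_cases hq : (q : ℕ) < m + 1
        · have hp : (p : ℕ) < m + 1 := by
            have := Fin.lt_def.mp hpq; omega
          rw [hval p hp, hval q hq]
          exact hg1 (Fin.mk_lt_mk.mpr (Fin.lt_def.mp hpq))
        · have hq' : q = Fin.last (m + 1) := by
            apply Fin.ext; have := q.isLt; simp [Fin.last]; omega
          have hp : (p : ℕ) < m + 1 := by
            have := Fin.lt_def.mp hpq; rw [hq'] at hpq
            have := Fin.lt_def.mp hpq; simp [Fin.last] at this; omega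
          rw [hq', hlastval, hval p hp]
          exact lt_of_le_of_lt (hle _) hij
      · intro p q hpq
        by_cases hq : (q : ℕ) < m + 1
        · have hp : (p : ℕ) < m + 1 := by
            have := Fin.lt_def.mp hpq; omega
          simp only [Function.comp_apply]
          rw [hval p hp, hval q hq]
          exact hg2 (Fin.mk_lt_mk.mpr (Fin.lt_def.mp hpq))
        · have hq' : q = Fin.last (m + 1) := by
            apply Fin.ext; have := q.isLt; simp [Fin.last]; omega
          have hp : (p : ℕ) < m + 1 := by
            rw [hq'] at hpq
            have := Fin.lt_def.mp hpq; simp [Fin.last] at this; omega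
          simp only [Function.comp_apply]
          rw [hq', hlastval, hval p hp]
          exact lt_of_le_of_lt (hale _) haij
    have : m + 1 ≤ f j := le_csSup (hbdd' j) key
    omega
  refine ⟨fun i => ⟨f i, hflt i⟩, ?_⟩
  intro j i1 h1 i2 h2 h12
  simp only [Set.mem_setOf_eq] at h1 h2
  have hfeq : f i1 = f i2 := congrArg Fin.val (h1.trans h2.symm)
  rcases lt_trichotomy (a i1) (a i2) with h | h | h
  · have := hext i1 i2 h12 h; omega
  · exact absurd (ha h) (ne_of_lt h12)
  · exact h
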